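/- arXiv:2107.04699 — 3 statements merged into one kernel-verified Lean document; each statement's English description precedes it below -/
import Mathlib

section
/- Let Q and Q* be k-path partitions of a directed graph on n vertices, where Q has the minimum number of singletons (1-vertex paths) among all k-path partitions. Then |Q| ≤ (k/2)·|Q*|. -/
def IsKPathPartition {V : Type*} (G : V → V → Prop) (k : ℕ) (Q : List (List V)) : Prop :=
  (∀ p ∈ Q, p ≠ [] ∧ p.Nodup ∧ p.Chain' G ∧ p.length ≤ k) ∧
  Q.flatten.Nodup ∧ ∀ v : V, v ∈ Q.flatten

/-- The number of singletons (order-1 paths) in a partition. -/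
def numSingletons {V : Type*} (Q : List (List V)) : ℕ :=
  (Q.filter (fun p => p.length = 1)).length

lemma aux_lower {V : Type*} : ∀ Q : List (List V), (∀ p ∈ Q, p ≠ []) →
    2 * Q.length ≤ numSingletons Q + Q.flatten.length := by
  intro Q
  induction Q with
  | nil => intro _; simp [numSingletons]
  | cons p Q ih =>
    intro h
    have hp : p ≠ [] := (h p (by simp))
    have hQ : ∀ q ∈ Q, q ≠ [] := fun q hq => h q (by simp [hq])
    have := ih hQ
    have hplen : 1 ≤ p.length := List.length_pos_iff.mpr hp
    by_cases h1 : p.length = 1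
    · simp [numSingletons, List.filter_cons, h1] at *
      omega
    · have : 2 ≤ p.length := by omega
      simp [numSingletons, List.filter_cons, h1] at *
      omega

lemma aux_upper {V : Type*} (k : ℕ) (hk : 1 ≤ k) :
    ∀ Q : List (List V), (∀ p ∈ Q, p ≠ [] ∧ p.length ≤ k) →
    Q.flatten.length + (k - 1) * numSingletons Q ≤ k * Q.length := by
  obtain ⟨m, rfl⟩ : ∃ m, k = m + 1 := ⟨k - 1, by omega⟩
  simp only [Nat.add_sub_cancel]
  intro Q
  induction Q with
  | nil => intro _; simp [numSingletons]
  | cons p Q ih =>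
    intro h
    obtain ⟨hp, hpk⟩ := h p (by simp)
    have hQ : ∀ q ∈ Q, q ≠ [] ∧ q.length ≤ m + 1 := fun q hq => h q (by simp [hq])
    have := ih hQ
    have hplen : 1 ≤ p.length := List.length_pos_iff.mpr hp
    by_cases h1 : p.length = 1
    · simp [numSingletons, List.filter_cons, h1] at *
      ring_nf at this ⊢
      linarith
    · simp [numSingletons, List.filter_cons, h1] at *
      ring_nf at this ⊢
      linarith

lemma aux_card {V : Type*} [Fintype V] [DecidableEq V] (l : List V)
    (hnd : l.Nodup) (hall : ∀ v : V, v ∈ l) : l.length = Fintype.card V := by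
  have h1 : l.toFinset = Finset.univ := by
    ext v; simp [hall v]
  have h2 : l.toFinset.card = l.length := List.toFinset_card_of_nodup hnd
  rw [← h2, h1, Finset.card_univ]

theorem min_singletons_kPP_ratio {V : Type*} [Fintype V] [DecidableEq V]
    (G : V → V → Prop) (k : ℕ) (hk : 3 ≤ k) (Q Qstar : List (List V))
    (hQ : IsKPathPartition G k Q) (hQstar : IsKPathPartition G k Qstar)
    (hmin : ∀ Q' : List (List V), IsKPathPartition G k Q' →
      numSingletons Q ≤ numSingletons Q') :
    (Q.length : ℚ) ≤ (k : ℚ) / 2 * Qstar.length := by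
  obtain ⟨hQ1, hQ2, hQ3⟩ := hQ
  obtain ⟨hS1, hS2, hS3⟩ := hQstar
  have hlow : 2 * Q.length ≤ numSingletons Q + Q.flatten.length :=
    aux_lower Q (fun p hp => (hQ1 p hp).1)
  have hup : Qstar.flatten.length + (k - 1) * numSingletons Qstar ≤ k * Qstar.length :=
    aux_upper k (by omega) Qstar (fun p hp => ⟨(hS1 p hp).1, (hS1 p hp).2.2.2⟩)
  have hcard1 : Q.flatten.length = Fintype.card V := aux_card _ hQ2 hQ3
  have hcard2 : Qstar.flatten.length = Fintype.card V := aux_card _ hS2 hS3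
  have hs : numSingletons Q ≤ numSingletons Qstar := hmin Qstar ⟨hS1, hS2, hS3⟩
  have hmain : 2 * Q.length ≤ k * Qstar.length := by
    have : (k - 1) * numSingletons Qstar ≥ 1 * numSingletons Qstar :=
      Nat.mul_le_mul_right _ (by omega)
    omega
  rw [div_mul_eq_mul_div, le_div_iff₀ (by norm_num : (0:ℚ) < 2)]
  calc (Q.length : ℚ) * 2 = ((2 * Q.length : ℕ) : ℚ) := by push_cast; ring
    _ ≤ ((k * Qstar.length : ℕ) : ℚ) := by exact_mod_cast hmain
    _ = (k : ℚ) * Qstar.length := by push_cast; ring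
end

section
/- Let C be a path-cycle cover of a directed graph G and let U₂ ⊆ V(G) be such that no edge of C joins U₂ to its complement and C restricted to the complement of U₂ is a disjoint union of h 2-cycles. If C[U₂] is a maximum path-cycle cover of G[U₂] and Q* is any k-path partition of G such that every edge of Q* has both endpoints in U₂ or both endpoints in one of the h 2-cycles, with exactly one edge of Q* inside each 2-cycle, then |E(C)| ≥ |E(Q*)| + h. -/
/-- A path-cycle cover of `G`: a set of edges of `G` with in-degree and out-degree
at most 1 at every vertex. -/
def IsPathCycleCover {V : Type*} [DecidableEq V] (G : V → V → Prop)
    (M : Finset (V × V)) : Prop :=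
  (∀ e ∈ M, G e.1 e.2) ∧
  (∀ v : V, (M.filter (fun e => e.1 = v)).card ≤ 1) ∧
  (∀ v : V, (M.filter (fun e => e.2 = v)).card ≤ 1)

def numEdges {V : Type*} (Q : List (List V)) : ℕ :=
  (Q.map (fun p => p.length - 1)).sum

lemma zip_tail_mem_iff {V : Type*} (a b : V) :
    ∀ p : List V, (a, b) ∈ p.zip p.tail ↔ [a, b] <:+: p := by
  intro p
  induction p with
  | nil => simp
  | cons x l ih =>
    cases l with
    | nil =>
      simp only [List.tail_cons, List.zip_nil_right, List.not_mem_nil, false_iff]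
      intro hcon
      have := hcon.length_le
      simp at this
    | cons y l' =>
      simp only [List.tail_cons, List.zip_cons_cons, List.mem_cons, Prod.mk.injEq] at ih ⊢
      rw [List.infix_cons_iff, ← ih]
      constructor
      · rintro (⟨rfl, rfl⟩ | hmem)
        · left; simp [List.cons_prefix_cons]
        · right; exact hmem
      · rintro (hpre | hmem)
        · obtain ⟨rfl, h2⟩ := List.cons_prefix_cons.mp hpre
          obtain ⟨rfl, _⟩ := List.cons_prefix_cons.mp h2
          left; exact ⟨rfl, rfl⟩
        · right; exact hmem

lemma map_fst_zip_tail {V : Type*} : ∀ p : List V, ((p.zip p.tail).map Prod.fst).Sublist p := by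
  intro p
  induction p with
  | nil => simp
  | cons x l ih =>
    cases l with
    | nil => simp
    | cons y l' =>
      simp only [List.tail_cons, List.zip_cons_cons, List.map_cons]
      exact (ih).cons₂ x

lemma map_snd_zip_tail_aux {V : Type*} : ∀ p : List V, ((p.zip p.tail).map Prod.snd).Sublist p.tail := by
  intro p
  induction p with
  | nil => simp
  | cons x l ih =>
    cases l with
    | nil => simp
    | cons y l' =>
      simp only [List.tail_cons, List.zip_cons_cons, List.map_cons]
      exact (ih).cons₂ y

lemma map_snd_zip_tail {V : Type*} (p : List V) : ((p.zip p.tail).map Prod.snd).Sublist p :=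
  (map_snd_zip_tail_aux p).trans (List.tail_sublist p)

lemma flatMap_fst_sublist {V : Type*} : ∀ Q : List (List V),
    ((Q.flatMap fun p => p.zip p.tail).map Prod.fst).Sublist Q.flatten := by
  intro Q
  induction Q with
  | nil => simp
  | cons p Q ih =>
    simp only [List.flatMap_cons, List.flatten_cons, List.map_append]
    exact (map_fst_zip_tail p).append ih

lemma flatMap_snd_sublist {V : Type*} : ∀ Q : List (List V),
    ((Q.flatMap fun p => p.zip p.tail).map Prod.snd).Sublist Q.flatten := by
  intro Q
  induction Q with
  | nil => simp
  | cons p Q ih =>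
    simp only [List.flatMap_cons, List.flatten_cons, List.map_append]
    exact (map_snd_zip_tail p).append ih

/-- Lemma 3 setting: `C` is a path-cycle cover of `G`, no edge of `C` crosses
between `U₂` and its complement, and `C` restricted to the complement of `U₂`
consists of `h` vertex-disjoint 2-cycles (recorded by `pairs`, one ordered pair
per 2-cycle).  If `C[U₂]` is a maximum path-cycle cover of `G[U₂]` and `Q*` is a
`k`-path partition of `G` each of whose edges lies within `U₂` or within one of
the 2-cycles, with exactly one edge inside each 2-cycle, then
`|E(C)| ≥ |E(Q*)| + h`. -/
theorem pcc_edges_ge_opt_add_h {V : Type*} [Fintype V] [DecidableEq V]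
    (G : V → V → Prop) (C : Finset (V × V)) (U₂ : Finset V)
    (pairs : Finset (V × V)) (h k : ℕ) (Qstar : List (List V))
    (hC : IsPathCycleCover G C)
    (hsep : ∀ e ∈ C, (e.1 ∈ U₂ ↔ e.2 ∈ U₂))
    (hcard : pairs.card = h)
    (hpairs : ∀ e ∈ pairs, e.1 ≠ e.2 ∧ e.1 ∉ U₂ ∧ e.2 ∉ U₂)
    (hdisj : ∀ e ∈ pairs, ∀ e' ∈ pairs, e ≠ e' →
      e.1 ≠ e'.1 ∧ e.1 ≠ e'.2 ∧ e.2 ≠ e'.1 ∧ e.2 ≠ e'.2)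
    (hCout : C.filter (fun e => e.1 ∉ U₂)
      = pairs ∪ pairs.image (fun e => (e.2, e.1)))
    (hcover : ∀ v : V, v ∉ U₂ → ∃ e ∈ pairs, v = e.1 ∨ v = e.2)
    (hmaxU2 : ∀ M : Finset (V × V),
      IsPathCycleCover (fun u v => G u v ∧ u ∈ U₂ ∧ v ∈ U₂) M →
      M.card ≤ (C.filter (fun e => e.1 ∈ U₂)).card)
    (hQ : IsKPathPartition G k Qstar)
    (hQedges : ∀ p ∈ Qstar, ∀ u v : V, [u, v] <:+: p →
      (u ∈ U₂ ∧ v ∈ U₂) ∨ ∃ e ∈ pairs, (u = e.1 ∧ v = e.2) ∨ (u = e.2 ∧ v = e.1))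
    (hone : ∀ e ∈ pairs, ∃! uv : V × V,
      (uv = e ∨ uv = (e.2, e.1)) ∧ ∃ p ∈ Qstar, [uv.1, uv.2] <:+: p) :
    numEdges Qstar + h ≤ C.card := by
  classical
  set E : List (V × V) := Qstar.flatMap (fun p => p.zip p.tail) with hE
  -- membership characterization
  have hmemE : ∀ uv : V × V, uv ∈ E ↔ ∃ p ∈ Qstar, [uv.1, uv.2] <:+: p := by
    intro uv
    rw [hE, List.mem_flatMap]
    constructor
    · rintro ⟨p, hp, huv⟩
      exact ⟨p, hp, (zip_tail_mem_iff uv.1 uv.2 p).mp (by simpa using huv)⟩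
    · rintro ⟨p, hp, huv⟩
      exact ⟨p, hp, by simpa using (zip_tail_mem_iff uv.1 uv.2 p).mpr huv⟩
  have hfst : (E.map Prod.fst).Nodup := (flatMap_fst_sublist Qstar).nodup hQ.2.1
  have hsnd : (E.map Prod.snd).Nodup := (flatMap_snd_sublist Qstar).nodup hQ.2.1
  have hEnd : E.Nodup := hfst.of_map
  have hlen : E.length = numEdges Qstar := by
    rw [hE, List.length_flatMap, numEdges]
    congr 1
    apply List.map_congr_left
    intro p _
    simp only [Function.comp_apply, List.length_zip, List.length_tail]
    omega
  set T : Finset (V × V) := E.toFinset with hT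
  have hTcard : T.card = numEdges Qstar := by
    rw [hT, List.toFinset_card_of_nodup hEnd, hlen]
  have hmemT : ∀ uv : V × V, uv ∈ T ↔ ∃ p ∈ Qstar, [uv.1, uv.2] <:+: p := by
    intro uv; rw [hT, List.mem_toFinset]; exact hmemE uv
  have hinjf : ∀ a ∈ E, ∀ b ∈ E, a.1 = b.1 → a = b :=
    fun a ha b hb hab => List.inj_on_of_nodup_map hfst ha hb hab
  have hinjs : ∀ a ∈ E, ∀ b ∈ E, a.2 = b.2 → a = b :=
    fun a ha b hb hab => List.inj_on_of_nodup_map hsnd ha hb hab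
  set M : Finset (V × V) := T.filter (fun e => e.1 ∈ U₂ ∧ e.2 ∈ U₂) with hM
  have hEG : ∀ e ∈ E, G e.1 e.2 := by
    intro e he
    obtain ⟨p, hp, hinf⟩ := (hmemE e).mp he
    have hch := ((hQ.1 p hp).2.2.1).infix hinf
    simpa using hch
  have hMpcc : IsPathCycleCover (fun u v => G u v ∧ u ∈ U₂ ∧ v ∈ U₂) M := by
    refine ⟨?_, ?_, ?_⟩
    · intro e he
      rw [hM, Finset.mem_filter] at he
      exact ⟨hEG e (List.mem_toFinset.mp he.1), he.2.1, he.2.2⟩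
    · intro v
      apply Finset.card_le_one.mpr
      intro a ha b hb
      simp only [hM, hT, Finset.mem_filter, List.mem_toFinset] at ha hb
      exact hinjf a ha.1.1 b hb.1.1 (ha.2.trans hb.2.symm)
    · intro v
      apply Finset.card_le_one.mpr
      intro a ha b hb
      simp only [hM, hT, Finset.mem_filter, List.mem_toFinset] at ha hb
      exact hinjs a ha.1.1 b hb.1.1 (ha.2.trans hb.2.symm)
  have hMle : M.card ≤ (C.filter (fun e => e.1 ∈ U₂)).card := hmaxU2 M hMpcc
  -- out part
  have hout : (T.filter (fun e => ¬(e.1 ∈ U₂ ∧ e.2 ∈ U₂))).card = h := by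
    rw [← hcard]
    symm
    set g : V × V → V × V := fun e =>
      if he : e ∈ pairs then Classical.choose ((hone e he).exists) else e with hgdef
    have hg : ∀ e ∈ pairs, (g e = e ∨ g e = (e.2, e.1)) ∧
        ∃ p ∈ Qstar, [(g e).1, (g e).2] <:+: p := by
      intro e he
      rw [hgdef]
      simp only [dif_pos he]
      exact Classical.choose_spec (hone e he).exists
    have hguniq : ∀ e, ∀ he : e ∈ pairs, ∀ uv : V × V,
        ((uv = e ∨ uv = (e.2, e.1)) ∧ ∃ p ∈ Qstar, [uv.1, uv.2] <:+: p) → uv = g e := by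
      intro e he uv hP
      exact (hone e he).unique hP (hg e he)
    refine Finset.card_bij (fun e _ => g e) ?_ ?_ ?_
    · intro e he
      obtain ⟨h1, h2⟩ := hg e he
      show g e ∈ _
      rw [Finset.mem_filter, hmemT]
      refine ⟨h2, ?_⟩
      obtain ⟨hne, hn1, hn2⟩ := hpairs e he
      rcases h1 with huv | huv
      · rw [huv]; exact fun hc => hn1 hc.1
      · rw [huv]; exact fun hc => hn2 hc.1
    · intro a ha b hb heq
      have heq : g a = g b := heq
      by_contra hab
      obtain ⟨d1, d2, d3, d4⟩ := hdisj a ha b hb hab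
      rcases (hg a ha).1 with h1 | h1 <;> rcases (hg b hb).1 with h2 | h2 <;>
        rw [h1, h2] at heq
      · exact hab heq
      · exact d2 (congrArg Prod.fst heq)
      · exact d3 (congrArg Prod.fst heq)
      · exact hab (Prod.ext (congrArg Prod.snd heq) (congrArg Prod.fst heq))
    · intro uv huv
      rw [Finset.mem_filter, hmemT] at huv
      obtain ⟨⟨p, hp, hinf⟩, hnot⟩ := huv
      rcases hQedges p hp uv.1 uv.2 hinf with hin | ⟨e, he, hcase⟩
      · exact absurd hin hnot
      · refine ⟨e, he, ?_⟩
        have hP : (uv = e ∨ uv = (e.2, e.1)) ∧ ∃ p ∈ Qstar, [uv.1, uv.2] <:+: p := by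
          refine ⟨?_, p, hp, hinf⟩
          rcases hcase with ⟨h1, h2⟩ | ⟨h1, h2⟩
          · left; exact Prod.ext h1 h2
          · right; exact Prod.ext h1 h2
        exact (hguniq e he uv hP).symm
  -- T split
  have hsplit : M.card + h = numEdges Qstar := by
    rw [← hTcard, ← hout, hM]
    exact Finset.card_filter_add_card_filter_not _
  -- C split
  have hdisjPair : Disjoint pairs (pairs.image (fun e => (e.2, e.1))) := by
    rw [Finset.disjoint_left]
    intro x hx hx'
    obtain ⟨e, he, heq⟩ := Finset.mem_image.mp hx'
    by_cases hxe : x = e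
    · subst hxe
      exact (hpairs x hx).1 ((congrArg Prod.fst heq).symm)
    · exact (hdisj x hx e he hxe).2.1 (congrArg Prod.fst heq).symm
  have himg : (pairs.image (fun e => (e.2, e.1))).card = h := by
    rw [Finset.card_image_of_injective _ (fun a b hab =>
      Prod.ext (congrArg Prod.snd hab) (congrArg Prod.fst hab)), hcard]
  have hCout2 : (C.filter (fun e => e.1 ∉ U₂)).card = 2 * h := by
    rw [hCout, Finset.card_union_of_disjoint hdisjPair, hcard, himg]
    omega
  have hCsplit : (C.filter (fun e => e.1 ∈ U₂)).card + 2 * h = C.card := by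
    rw [← hCout2]
    exact Finset.card_filter_add_card_filter_not _
  omega
end

section
/- Let G be a directed graph and Q a k-path partition of G. Suppose u is a singleton of Q, (u,v) ∈ E(G), and v is the j-th vertex (j ≠ 2) of an ℓ-path of Q with ℓ ≤ k. Then Q can be transformed into another k-path partition Q' of G with strictly fewer singletons. -/
private theorem erase_inst' {V : Type*} [DecidableEq V] (Q : List (List V)) (a : List V) :
    @List.erase _ List.instBEq Q a = @List.erase _ instBEqOfDecidableEq Q a := by
  simp only [List.erase_eq_eraseP']
  congr 1
  funext x
  rw [Bool.eq_iff_iff]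
  simp

private theorem perm_flatten' {α : Type*} {l₁ l₂ : List (List α)} (h : l₁.Perm l₂) :
    l₁.flatten.Perm l₂.flatten := by
  induction h with
  | nil => exact .rfl
  | cons x _ ih => simpa using ih.append_left x
  | swap x y l =>
      simp only [List.flatten_cons, ← List.append_assoc]
      exact (List.perm_append_comm).append_right _
  | trans _ _ ih1 ih2 => exact ih1.trans ih2

private theorem numSingletons_perm {V : Type*} {Q Q' : List (List V)} (h : Q.Perm Q') :
    numSingletons Q = numSingletons Q' :=
  (h.filter _).length_eq

private theorem numSingletons_append {V : Type*} (Q Q' : List (List V)) :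
    numSingletons (Q ++ Q') = numSingletons Q + numSingletons Q' := by
  simp [numSingletons, List.filter_append]

/-- Key reduction lemma: replace the two paths `[u]` and `p` by `pieces`. -/
private theorem key_lemma {V : Type*} [DecidableEq V]
    (G : V → V → Prop) (k : ℕ) (Q : List (List V)) (hQ : IsKPathPartition G k Q)
    (u : V) (p : List V) (hu : [u] ∈ Q) (hp : p ∈ Q) (hne : p ≠ [u])
    (pieces : List (List V)) (hperm : pieces.flatten.Perm (u :: p))
    (hgood : ∀ q ∈ pieces, q ≠ [] ∧ q.Nodup ∧ q.Chain' G ∧ q.length ≤ k)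
    (hns : ∀ q ∈ pieces, q.length ≠ 1) :
    ∃ Q' : List (List V), IsKPathPartition G k Q' ∧
      numSingletons Q' < numSingletons Q := by
  obtain ⟨hpaths, hnd, hall⟩ := hQ
  set R := (Q.erase [u]).erase p with hR
  have hp' : p ∈ Q.erase [u] := (List.mem_erase_of_ne hne).mpr hp
  have h1 : Q.Perm ([u] :: Q.erase [u]) := by
    exact List.perm_cons_erase hu
  have h2 : (Q.erase [u]).Perm (p :: R) := by
    rw [hR]; exact List.perm_cons_erase hp'
  have hQperm : Q.Perm ([u] :: p :: R) := h1.trans (h2.cons [u])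
  have hRQ : ∀ q ∈ R, q ∈ Q := fun q hq =>
    List.mem_of_mem_erase (List.mem_of_mem_erase hq)
  refine ⟨pieces ++ R, ⟨?_, ?_, ?_⟩, ?_⟩
  · intro q hq
    rcases List.mem_append.mp hq with h | h
    · exact hgood q h
    · exact hpaths q (hRQ q h)
  · have h1 : (pieces ++ R).flatten.Perm Q.flatten := by
      rw [List.flatten_append]
      refine (hperm.append_right R.flatten).trans ?_
      have := perm_flatten' hQperm
      simp only [List.flatten_cons, List.singleton_append] at this ⊢
      exact this.symm
    exact h1.nodup_iff.mpr hnd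
  · intro v
    have h1 : (pieces ++ R).flatten.Perm Q.flatten := by
      rw [List.flatten_append]
      refine (hperm.append_right R.flatten).trans ?_
      have := perm_flatten' hQperm
      simp only [List.flatten_cons, List.singleton_append] at this ⊢
      exact this.symm
    exact h1.mem_iff.mpr (hall v)
  · have hzero : numSingletons pieces = 0 := by
      simp only [numSingletons, List.length_eq_zero_iff, List.filter_eq_nil_iff]
      intro q hq
      simpa using hns q hq
    have h1 : numSingletons (pieces ++ R) = numSingletons R := by
      rw [numSingletons_append, hzero, Nat.zero_add]
    have h2 : numSingletons Q = 1 + numSingletons (p :: R) := by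
      rw [numSingletons_perm hQperm]
      simp [numSingletons, List.filter_cons, Nat.add_comm]
    have h3 : numSingletons R ≤ numSingletons (p :: R) := by
      by_cases h : p.length = 1 <;> simp [numSingletons, List.filter_cons, h]
    omega

/-- If `u` is a singleton of a `k`-path partition `Q`, `(u,v)` is an edge of `G`,
and `v` is the `j`-th vertex (`j ≠ 2`, 1-indexed) of an `ℓ`-path of `Q`
(`ℓ ≤ k`), then `Q` can be transformed into a `k`-path partition with strictly
fewer singletons. -/
theorem reduce_singletons {V : Type*} [Fintype V] [DecidableEq V]
    (G : V → V → Prop) (hirr : ∀ w, ¬ G w w)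
    (k : ℕ) (hk : 3 ≤ k) (Q : List (List V)) (hQ : IsKPathPartition G k Q)
    (u v : V) (hu : [u] ∈ Q) (huv : G u v)
    (p : List V) (ℓ j : ℕ) (hp : p ∈ Q) (hpl : p.length = ℓ) (hℓk : ℓ ≤ k)
    (hj1 : 1 ≤ j) (hj2 : j ≠ 2) (hjℓ : j ≤ ℓ)
    (hv : p[j - 1]? = some v) :
    ∃ Q' : List (List V), IsKPathPartition G k Q' ∧
      numSingletons Q' < numSingletons Q := by
  have huv' : u ≠ v := fun h => hirr u (h ▸ huv)
  have hvp : v ∈ p := List.mem_of_getElem? hv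
  have hne : p ≠ [u] := by
    rintro rfl
    simp only [List.mem_singleton] at hvp
    exact huv' hvp.symm
  obtain ⟨hpaths, hnd, hall⟩ := hQ
  obtain ⟨hpne, hpnd, hpch, hpk⟩ := hpaths p hp
  -- u ∉ p
  have hup : u ∉ p := by
    intro hupmem
    have hp' : p ∈ Q.erase [u] := (List.mem_erase_of_ne hne).mpr hp
    have h1 : Q.Perm ([u] :: Q.erase [u]) := by
      exact List.perm_cons_erase hu
    have h2 : (Q.erase [u]).Perm (p :: (Q.erase [u]).erase p) := by
      exact List.perm_cons_erase hp'
    have hQperm : Q.Perm ([u] :: p :: (Q.erase [u]).erase p) := h1.trans (h2.cons [u])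
    have hnd' := (perm_flatten' hQperm).nodup_iff.mp hnd
    simp only [List.flatten_cons, List.singleton_append, List.nodup_cons] at hnd'
    exact hnd'.1 (List.mem_append.mpr (Or.inl hupmem))
  have hQ' : IsKPathPartition G k Q := ⟨hpaths, hnd, hall⟩
  -- head? of drop
  have hdrop_head : (p.drop (j - 1)).head? = some v := by
    rw [List.head?_drop]; exact hv
  rcases eq_or_ne j 1 with rfl | hj1'
  · -- j = 1 : v is the head of p
    simp only [Nat.sub_self, List.drop_zero] at hdrop_head
    by_cases hlk : ℓ + 1 ≤ k
    · -- attach u at the front of p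
      refine key_lemma G k Q hQ' u p hu hp hne [u :: p] (by simp) ?_ ?_
      · intro q hq
        simp only [List.mem_singleton] at hq
        subst hq
        refine ⟨by simp, List.nodup_cons.mpr ⟨hup, hpnd⟩, ?_, by simp [hpl]; omega⟩
        apply List.isChain_cons.mpr
        exact ⟨fun y hy => by rw [hdrop_head] at hy; cases hy; exact huv, hpch⟩
      · intro q hq
        simp only [List.mem_singleton] at hq
        subst hq
        simp [Nat.succ_ne_succ, List.length_eq_zero_iff]
        intro h; rw [h] at hpne; exact hpne rfl
    · -- ℓ = k ≥ 3 : split p into [u, v] and p.tail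
      have hl3 : 3 ≤ ℓ := by omega
      have hptail : p = v :: p.tail := by
        cases p with
        | nil => simp at hpne
        | cons a t => simp only [List.head?_cons, Option.some.injEq] at hdrop_head; simp [hdrop_head]
      refine key_lemma G k Q hQ' u p hu hp hne [[u, v], p.tail] ?_ ?_ ?_
      · rw [show ([[u, v], p.tail] : List (List V)).flatten = u :: v :: p.tail by simp]
        rw [← hptail]
      · intro q hq
        simp only [List.mem_cons, List.mem_singleton, List.not_mem_nil, or_false] at hq
        rcases hq with rfl | rfl
        · exact ⟨by simp, by simp [huv'], List.isChain_pair.mpr huv, by simp; omega⟩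
        · refine ⟨?_, hpnd.sublist (List.tail_sublist p), hpch.suffix (List.tail_suffix p), ?_⟩
          · rw [← List.length_pos_iff, List.length_tail, hpl]; omega
          · rw [List.length_tail, hpl]; omega
      · intro q hq
        simp only [List.mem_cons, List.mem_singleton, List.not_mem_nil, or_false] at hq
        rcases hq with rfl | rfl
        · simp
        · rw [List.length_tail, hpl]; omega
  · -- j ≥ 3 : split p into p.take (j-1) and u :: p.drop (j-1)
    have hj3 : 3 ≤ j := by omega
    have htlen : (p.take (j - 1)).length = j - 1 := by
      rw [List.length_take, hpl]; omega
    have hdlen : (p.drop (j - 1)).length = ℓ - (j - 1) := by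
      rw [List.length_drop, hpl]
    refine key_lemma G k Q hQ' u p hu hp hne [p.take (j - 1), u :: p.drop (j - 1)] ?_ ?_ ?_
    · rw [show ([p.take (j - 1), u :: p.drop (j - 1)] : List (List V)).flatten
          = p.take (j - 1) ++ u :: p.drop (j - 1) by simp]
      refine (List.perm_middle).trans ?_
      rw [List.take_append_drop]
    · intro q hq
      simp only [List.mem_cons, List.mem_singleton, List.not_mem_nil, or_false] at hq
      rcases hq with rfl | rfl
      · refine ⟨?_, hpnd.sublist (List.take_sublist _ _),
          hpch.prefix (List.take_prefix _ _), ?_⟩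
        · rw [← List.length_pos_iff, htlen]; omega
        · rw [htlen]; omega
      · refine ⟨by simp, ?_, ?_, ?_⟩
        · exact List.nodup_cons.mpr
            ⟨fun h => hup (List.mem_of_mem_drop h), hpnd.sublist (List.drop_sublist _ _)⟩
        · apply List.isChain_cons.mpr
          refine ⟨fun y hy => ?_, hpch.suffix (List.drop_suffix _ _)⟩
          rw [hdrop_head] at hy; cases hy; exact huv
        · simp only [List.length_cons, hdlen]; omega
    · intro q hq
      simp only [List.mem_cons, List.mem_singleton, List.not_mem_nil, or_false] at hq
      rcases hq with rfl | rfl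
      · rw [htlen]; omega
      · simp only [List.length_cons, hdlen]; omega
end
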